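/- Let S ∈ End(ℂ^m) be symmetric (Sᵀ = S for the bilinear form) with positive definite real part Re S. Then the Gaussian integral ∫_{ℝ^m} exp(−π⟨SZ,Z⟩) dZ converges and equals det(S)^{-1/2}, where det(S)^{1/2} is defined by analytic continuation of the positive square root along the path t ↦ Re S + t·i·Im S, t ∈ [0,1], of matrices all of which are invertible. -/

import Mathlib

open Matrix MeasureTheory

noncomputable section

/-- Standard complex structure on ℝ^{2n}: J₀ e_{2k} = e_{2k+1}, J₀ e_{2k+1} = -e_{2k}. -/
def J0 (n : ℕ) : Matrix (Fin (2*n)) (Fin (2*n)) ℝ :=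
  Matrix.of fun i j =>
    if (i : ℕ) = (j : ℕ) + 1 ∧ (j : ℕ) % 2 = 0 then 1
    else if (j : ℕ) = (i : ℕ) + 1 ∧ (i : ℕ) % 2 = 0 then -1 else 0

/-- Standard symplectic form Ω(u,v) = ⟨J₀ u, v⟩. -/
def Omega (n : ℕ) (u v : Fin (2*n) → ℝ) : ℝ := (J0 n *ᵥ u) ⬝ᵥ v

/-- A complex structure J compatible with Ω: J² = -Id, Ω is J-invariant,
and ⟨·,·⟩_J := Ω(·, J·) is positive definite. -/
def Compatible (n : ℕ) (J : Matrix (Fin (2*n)) (Fin (2*n)) ℝ) : Prop :=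
  J * J = -1 ∧ (∀ u v, Omega n (J *ᵥ u) (J *ᵥ v) = Omega n u v) ∧
    ∀ v : Fin (2*n) → ℝ, v ≠ 0 → 0 < Omega n v (J *ᵥ v)

/-- Complexification of a real matrix. -/
def mc {m : ℕ} (M : Matrix (Fin m) (Fin m) ℝ) : Matrix (Fin m) (Fin m) ℂ :=
  M.map (fun x => (x : ℂ))

/-- Complexification of a real vector. -/
def vc {m : ℕ} (v : Fin m → ℝ) : Fin m → ℂ := fun i => (v i : ℂ)

/-- Projection P^{(1,0)} = ½(Id - iK) onto the +i eigenspace of K. -/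
def P10 {n : ℕ} (K : Matrix (Fin (2*n)) (Fin (2*n)) ℝ) : Matrix (Fin (2*n)) (Fin (2*n)) ℂ :=
  (1/2 : ℂ) • (1 - Complex.I • mc K)

/-- Projection P^{(0,1)} = ½(Id + iK) onto the -i eigenspace of K. -/
def P01 {n : ℕ} (K : Matrix (Fin (2*n)) (Fin (2*n)) ℝ) : Matrix (Fin (2*n)) (Fin (2*n)) ℂ :=
  (1/2 : ℂ) • (1 + Complex.I • mc K)

/-- `Amat n K J = (½(Id + (-K)·J))⁻¹`; so `Amat n (J0 n) J` is A_t^0 and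
`Amat n J (J0 n)` is A_0^t. -/
def Amat (n : ℕ) (K J : Matrix (Fin (2*n)) (Fin (2*n)) ℝ) : Matrix (Fin (2*n)) (Fin (2*n)) ℝ :=
  ((1/2 : ℝ) • (1 + (-K) * J))⁻¹

/-- Π_t^0 = A_t^0 · P₀^{(1,0)}, the projection onto V_t^{(1,0)} with kernel V₀^{(0,1)}. -/
def PiT0 (n : ℕ) (J : Matrix (Fin (2*n)) (Fin (2*n)) ℝ) : Matrix (Fin (2*n)) (Fin (2*n)) ℂ :=
  mc (Amat n (J0 n) J) * P10 (J0 n)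

/-- Π_0^t = A_0^t · P_t^{(1,0)}, the projection onto V₀^{(1,0)} with kernel V_t^{(0,1)}. -/
def Pi0T (n : ℕ) (J : Matrix (Fin (2*n)) (Fin (2*n)) ℝ) : Matrix (Fin (2*n)) (Fin (2*n)) ℂ :=
  mc (Amat n J (J0 n)) * P10 J

/-- Model Bergman kernel 𝒫_J(Z,Z') = exp(-(π/2)⟨(-J₀J)(Z-Z'),Z-Z'⟩ - πiΩ(Z,Z')). -/
def Pker (n : ℕ) (J : Matrix (Fin (2*n)) (Fin (2*n)) ℝ) (Z Z' : Fin (2*n) → ℝ) : ℂ :=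
  Complex.exp (-(Real.pi : ℂ)/2 * Complex.ofReal ((((-(J0 n)) * J) *ᵥ (Z - Z')) ⬝ᵥ (Z - Z'))
    - (Real.pi : ℂ) * Complex.I * Complex.ofReal (Omega n Z Z'))

/-- Closed formula for the composed kernel (𝒫_t𝒫_0)(Z,Z'). -/
def PtP0form (n : ℕ) (J : Matrix (Fin (2*n)) (Fin (2*n)) ℝ) (Z Z' : Fin (2*n) → ℝ) : ℂ :=
  Complex.ofReal (Real.sqrt (Amat n (J0 n) J).det) *
    Complex.exp (-(Real.pi : ℂ) *
      ((Pi0T n J *ᵥ (vc Z - vc Z')) ⬝ᵥ (vc Z - vc Z')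
        + Complex.I * Complex.ofReal (Omega n Z Z')))


/-! ### Auxiliary lemmas for `stmt17` -/

lemma mcX_mul {m : ℕ} (M N : Matrix (Fin m) (Fin m) ℝ) : mc (M * N) = mc M * mc N := by
  ext i j; simp [mc, Matrix.mul_apply]

lemma mcX_transpose {m : ℕ} (M : Matrix (Fin m) (Fin m) ℝ) : mc Mᵀ = (mc M)ᵀ := by
  ext i j; simp [mc]

lemma mcX_one {m : ℕ} : mc (1 : Matrix (Fin m) (Fin m) ℝ) = 1 := by
  ext i j; simp [mc, Matrix.one_apply]; split <;> simp

lemma mcX_det {m : ℕ} (M : Matrix (Fin m) (Fin m) ℝ) : (mc M).det = (M.det : ℂ) :=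
  (RingHom.map_det (Complex.ofRealHom) M).symm

lemma vcX_mulVec {m : ℕ} (M : Matrix (Fin m) (Fin m) ℝ) (v : Fin m → ℝ) :
    vc (M *ᵥ v) = mc M *ᵥ vc v := by
  ext i; simp [vc, mc, Matrix.mulVec, dotProduct]

lemma realX_herm {m : ℕ} {M : Matrix (Fin m) (Fin m) ℝ} (h : Mᵀ = M) : M.IsHermitian := by
  rw [Matrix.IsHermitian]; ext i j
  simp only [Matrix.conjTranspose_apply, star_trivial]
  exact congrFun (congrFun h.symm j) i |>.symm ▸ rfl

lemma quadX_real {m : ℕ} (M : Matrix (Fin m) (Fin m) ℝ) (Z : Fin m → ℝ) :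
    ((M.map (fun x => (x:ℂ))) *ᵥ vc Z) ⬝ᵥ vc Z = (((M *ᵥ Z) ⬝ᵥ Z : ℝ) : ℂ) := by
  simp only [Matrix.mulVec, dotProduct, vc, Matrix.map_apply]
  push_cast
  ring

lemma contX_gauss {m : ℕ} (M : Matrix (Fin m) (Fin m) ℂ) :
    Continuous (fun Z : Fin m → ℝ => Complex.exp (-(Real.pi : ℂ) * ((M *ᵥ vc Z) ⬝ᵥ vc Z))) := by
  apply Complex.continuous_exp.comp
  apply continuous_const.mul
  simp only [dotProduct, Matrix.mulVec, vc]
  exact continuous_finset_sum _ fun i _ =>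
    ((continuous_finset_sum _ fun j _ => continuous_const.mul
      (Complex.continuous_ofReal.comp (continuous_apply j))).mul
      (Complex.continuous_ofReal.comp (continuous_apply i)))

lemma covX_integral {m : ℕ} (Q : Matrix (Fin m) (Fin m) ℝ) (hQ : Q.det ≠ 0)
    (f : (Fin m → ℝ) → ℂ) (hf : Continuous f) :
    (∫ x : Fin m → ℝ, f x) = |Q.det| * ∫ x : Fin m → ℝ, f (Q *ᵥ x) := by
  have hmeas : Measurable (Matrix.toLin' Q) :=
    (LinearMap.continuous_on_pi _).measurable
  have hmap := Real.map_matrix_volume_pi_eq_smul_volume_pi hQ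
  have hvol : (volume : Measure (Fin m → ℝ)) =
      ENNReal.ofReal |Q.det| • Measure.map (Matrix.toLin' Q) volume := by
    rw [hmap, smul_smul, ← ENNReal.ofReal_mul (abs_nonneg _), ← abs_mul,
      mul_inv_cancel₀ hQ, abs_one, ENNReal.ofReal_one, one_smul]
  calc (∫ x : Fin m → ℝ, f x)
      = ∫ x, f x ∂(ENNReal.ofReal |Q.det| • Measure.map (Matrix.toLin' Q) volume) := by
        rw [← hvol]
    _ = (ENNReal.ofReal |Q.det|).toReal • ∫ x, f x ∂(Measure.map (Matrix.toLin' Q) volume) := by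
        rw [integral_smul_measure]
    _ = |Q.det| * ∫ x : Fin m → ℝ, f (Q *ᵥ x) := by
        rw [integral_map hmeas.aemeasurable hf.aestronglyMeasurable]
        simp [ENNReal.toReal_ofReal (abs_nonneg _), Matrix.toLin'_apply, smul_eq_mul]

lemma covX_integrable {m : ℕ} (Q : Matrix (Fin m) (Fin m) ℝ) (hQ : Q.det ≠ 0)
    (f : (Fin m → ℝ) → ℂ) (hf : Continuous f)
    (h : Integrable (fun x => f (Q *ᵥ x))) : Integrable f := by
  have hmeas : Measurable (Matrix.toLin' Q) :=
    (LinearMap.continuous_on_pi _).measurable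
  have hmap := Real.map_matrix_volume_pi_eq_smul_volume_pi hQ
  have hvol : (volume : Measure (Fin m → ℝ)) =
      ENNReal.ofReal |Q.det| • Measure.map (Matrix.toLin' Q) volume := by
    rw [hmap, smul_smul, ← ENNReal.ofReal_mul (abs_nonneg _), ← abs_mul,
      mul_inv_cancel₀ hQ, abs_one, ENNReal.ofReal_one, one_smul]
  have h1 : Integrable f (Measure.map (Matrix.toLin' Q) volume) := by
    rw [integrable_map_measure hf.aestronglyMeasurable hmeas.aemeasurable]
    exact h
  have := h1.smul_measure (c := ENNReal.ofReal |Q.det|) (by simp)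
  rwa [← hvol] at this

open scoped MatrixOrder in
lemma diagX_exists {m : ℕ} (S : Matrix (Fin m) (Fin m) ℂ) (hsym : Sᵀ = S)
    (hpos : ∀ v : Fin m → ℝ, v ≠ 0 → 0 < ((S.map Complex.re) *ᵥ v) ⬝ᵥ v) :
    ∃ (Q : Matrix (Fin m) (Fin m) ℝ) (d : Fin m → ℝ), Q.det ≠ 0 ∧
      (mc Q)ᵀ * S * (mc Q) = Matrix.diagonal (fun j => 1 + Complex.I * d j) := by
  classical
  set A := S.map Complex.re with hA
  set B := S.map Complex.im with hB
  have hAt : Aᵀ = A := by rw [hA, ← Matrix.transpose_map, hsym]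
  have hBt : Bᵀ = B := by rw [hB, ← Matrix.transpose_map, hsym]
  have hApd : A.PosDef := by
    refine Matrix.PosDef.of_dotProduct_mulVec_pos (realX_herm hAt) fun x hx => ?_
    simpa [dotProduct_comm] using hpos x hx
  set R := CFC.sqrt A with hR
  have hRs : Rᵀ = R := by
    have := (CFC.sqrt_nonneg A).posSemidef.1
    rw [Matrix.IsHermitian] at this
    ext i j
    have := congrFun (congrFun this i) j
    simpa [Matrix.conjTranspose_apply] using this
  have hRR : R * R = A := CFC.sqrt_mul_sqrt_self A hApd.posSemidef.nonneg
  have hRdet : R.det ≠ 0 := by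
    intro h
    have : A.det = 0 := by rw [← hRR, Matrix.det_mul, h, mul_zero]
    exact ne_of_gt hApd.det_pos this
  have hRinv : R⁻¹ * R = 1 := Matrix.nonsing_inv_mul R (isUnit_iff_ne_zero.mpr hRdet)
  have hRinv' : R * R⁻¹ = 1 := Matrix.mul_nonsing_inv R (isUnit_iff_ne_zero.mpr hRdet)
  have hRit : (R⁻¹)ᵀ = R⁻¹ := by rw [Matrix.transpose_nonsing_inv, hRs]
  set C := R⁻¹ * B * R⁻¹ with hC
  have hCt : Cᵀ = C := by
    rw [hC, Matrix.transpose_mul, Matrix.transpose_mul, hRit, hBt, mul_assoc]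
  have hCh : C.IsHermitian := realX_herm hCt
  set U : Matrix (Fin m) (Fin m) ℝ := (hCh.eigenvectorUnitary : Matrix (Fin m) (Fin m) ℝ) with hU
  set d := hCh.eigenvalues with hd
  have hUU : star U * U = 1 := by
    exact Matrix.mem_unitaryGroup_iff'.mp hCh.eigenvectorUnitary.2
  have hUU' : U * star U = 1 := Matrix.mem_unitaryGroup_iff.mp hCh.eigenvectorUnitary.2
  have hUst : star U = Uᵀ := by
    ext i j; simp [Matrix.star_apply]
  have hspec : C = U * Matrix.diagonal d * Uᵀ := by
    have := hCh.spectral_theorem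
    rw [Unitary.conjStarAlgAut_apply, ← hU, hUst] at this
    simpa using this
  have hUdet : U.det ≠ 0 := by
    intro h
    have := congrArg Matrix.det hUU'
    rw [Matrix.det_mul, h, zero_mul, Matrix.det_one] at this
    exact zero_ne_one this
  refine ⟨R⁻¹ * U, d, ?_, ?_⟩
  · rw [Matrix.det_mul]
    refine mul_ne_zero (fun h => ?_) hUdet
    have := congrArg Matrix.det hRinv
    rw [Matrix.det_mul, h, zero_mul, Matrix.det_one] at this
    exact zero_ne_one this
  · have hS : S = mc A + Complex.I • mc B := by
      ext i j
      simp [mc, hA, hB, Matrix.add_apply, Matrix.smul_apply, Complex.ext_iff]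
    have hQA : (R⁻¹ * U)ᵀ * A * (R⁻¹ * U) = 1 := by
      calc (R⁻¹ * U)ᵀ * A * (R⁻¹ * U) = Uᵀ * (R⁻¹ * (R * R) * R⁻¹) * U := by
            rw [Matrix.transpose_mul, hRit, hRR]; simp [mul_assoc]
        _ = Uᵀ * U := by rw [← mul_assoc R⁻¹ R R, hRinv, one_mul, hRinv', mul_one]
        _ = 1 := by rw [← hUst, hUU]
    have hQB : (R⁻¹ * U)ᵀ * B * (R⁻¹ * U) = Matrix.diagonal d := by
      calc (R⁻¹ * U)ᵀ * B * (R⁻¹ * U) = Uᵀ * (R⁻¹ * B * R⁻¹) * U := by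
            rw [Matrix.transpose_mul, hRit]; simp [mul_assoc]
        _ = Uᵀ * (U * Matrix.diagonal d * Uᵀ) * U := by rw [← hC, ← hspec]
        _ = (Uᵀ * U) * Matrix.diagonal d * (Uᵀ * U) := by simp [mul_assoc]
        _ = Matrix.diagonal d := by rw [← hUst, hUU, one_mul, mul_one]
    rw [hS]
    have e1 : (mc (R⁻¹ * U))ᵀ * (mc A) * (mc (R⁻¹ * U)) = 1 := by
      rw [← mcX_transpose, ← mcX_mul, ← mcX_mul, hQA, mcX_one]
    have e2 : (mc (R⁻¹ * U))ᵀ * (mc B) * (mc (R⁻¹ * U))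
        = (Matrix.diagonal d).map (fun x => (x:ℂ)) := by
      rw [← mcX_transpose, ← mcX_mul, ← mcX_mul, hQB]; rfl
    rw [mul_add, add_mul, e1]
    rw [Matrix.mul_smul, Matrix.smul_mul, e2]
    ext i j
    by_cases h : i = j <;>
      simp [Matrix.diagonal, Matrix.one_apply, Matrix.add_apply, Matrix.smul_apply, h,
        Matrix.map_apply]

set_option maxHeartbeats 2000000 in
lemma keyX {m : ℕ} (S : Matrix (Fin m) (Fin m) ℂ) (hsym : Sᵀ = S)
    (hpos : ∀ v : Fin m → ℝ, v ≠ 0 → 0 < ((S.map Complex.re) *ᵥ v) ⬝ᵥ v) :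
    Integrable (fun Z : Fin m → ℝ => Complex.exp (-(Real.pi : ℂ) * ((S *ᵥ vc Z) ⬝ᵥ vc Z))) ∧
    (∫ Z : Fin m → ℝ, Complex.exp (-(Real.pi : ℂ) * ((S *ᵥ vc Z) ⬝ᵥ vc Z))) ^ 2 * S.det = 1 := by
  obtain ⟨Q, d, hQdet, hdiag⟩ := diagX_exists S hsym hpos
  set b : Fin m → ℂ := fun j => (Real.pi : ℂ) * (1 + Complex.I * d j) with hbdef
  have hπ : (Real.pi : ℂ) ≠ 0 := by
    simpa using Complex.ofReal_ne_zero.mpr (ne_of_gt Real.pi_pos)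
  have hb : ∀ j, 0 < (b j).re := by
    intro j
    have : (b j).re = Real.pi := by simp [hbdef, Complex.mul_re]
    rw [this]; exact Real.pi_pos
  have hbne : ∀ j, b j ≠ 0 := fun j h => by
    have := hb j; rw [h] at this; simp at this
  have hone : ∀ j, (1 : ℂ) + Complex.I * d j ≠ 0 := fun j h => by
    have := congrArg Complex.re h; simp at this
  set f : (Fin m → ℝ) → ℂ :=
    fun Z => Complex.exp (-(Real.pi : ℂ) * ((S *ᵥ vc Z) ⬝ᵥ vc Z)) with hfdef
  have hcont : Continuous f := contX_gauss S
  have hpt : ∀ x : Fin m → ℝ,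
      f (Q *ᵥ x) = ∏ j, Complex.exp (-(b j) * (x j : ℂ) ^ 2) := by
    intro x
    have h1 : (S *ᵥ vc (Q *ᵥ x)) ⬝ᵥ vc (Q *ᵥ x)
        = ∑ j, (1 + Complex.I * d j) * (x j : ℂ) ^ 2 := by
      rw [vcX_mulVec, Matrix.mulVec_mulVec, dotProduct_comm, Matrix.dotProduct_mulVec,
        Matrix.vecMul_mulVec, ← mul_assoc, hdiag]
      simp only [dotProduct, Matrix.vecMul_diagonal]
      refine Finset.sum_congr rfl fun j _ => ?_
      simp [vc]; ring
    rw [hfdef]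
    simp only
    rw [h1, Finset.mul_sum, ← Complex.exp_sum]
    congr 1
    refine Finset.sum_congr rfl fun j _ => ?_
    rw [hbdef]; ring
  have hgint : Integrable fun x : Fin m → ℝ =>
      ∏ j, Complex.exp (-(b j) * (x j : ℂ) ^ 2) :=
    Integrable.fintype_prod fun j => integrable_cexp_neg_mul_sq (hb j)
  have hint : Integrable f := by
    apply covX_integrable Q hQdet f hcont
    simpa only [funext hpt] using hgint
  refine ⟨hint, ?_⟩
  have hI : (∫ Z : Fin m → ℝ, f Z)
      = |Q.det| * ∏ j, ((Real.pi : ℂ) / b j) ^ ((1:ℂ) / 2) := by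
    rw [covX_integral Q hQdet f hcont]
    congr 1
    calc (∫ x : Fin m → ℝ, f (Q *ᵥ x))
        = ∫ x : Fin m → ℝ, ∏ j, Complex.exp (-(b j) * (x j : ℂ) ^ 2) := by
          congr 1; exact funext hpt
      _ = ∏ j, ∫ x : ℝ, Complex.exp (-(b j) * (x : ℂ) ^ 2) :=
          integral_fintype_prod_eq_prod fun j (x : ℝ) =>
            Complex.exp (-(b j) * (x : ℂ) ^ 2)
      _ = ∏ j, ((Real.pi : ℂ) / b j) ^ ((1:ℂ) / 2) := by
          exact Finset.prod_congr rfl fun j _ => integral_gaussian_complex (hb j)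
  have hdet : (Q.det : ℂ) ^ 2 * S.det = ∏ j, (1 + Complex.I * d j) := by
    have := congrArg Matrix.det hdiag
    rw [Matrix.det_mul, Matrix.det_mul, Matrix.det_transpose, mcX_det,
      Matrix.det_diagonal] at this
    rw [← this]; ring
  have hsq : ∀ j, (((Real.pi : ℂ) / b j) ^ ((1:ℂ) / 2)) ^ 2 = (Real.pi : ℂ) / b j := by
    intro j
    have hz : (Real.pi : ℂ) / b j ≠ 0 := div_ne_zero hπ (hbne j)
    rw [sq, ← Complex.cpow_add _ _ hz]
    norm_num
  have hfrac : ∀ j, (Real.pi : ℂ) / b j = (1 + Complex.I * d j)⁻¹ := by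
    intro j
    show (Real.pi : ℂ) / ((Real.pi : ℂ) * (1 + Complex.I * d j)) = _
    rw [div_mul_cancel_left₀ hπ]
  rw [hI, mul_pow, ← Complex.ofReal_pow, sq_abs, Complex.ofReal_pow, ← Finset.prod_pow]
  simp_rw [hsq, hfrac]
  rw [Finset.prod_inv_distrib, mul_assoc, mul_comm ((∏ j, (1 + Complex.I * (d j:ℂ)))⁻¹) S.det,
    ← mul_assoc, hdet]
  exact mul_inv_cancel₀ (Finset.prod_ne_zero_iff.mpr fun j _ => hone j)



set_option maxHeartbeats 1000000 in
/-- complex Gaussian integral: for S symmetric with positive definite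
real part, ∫_{ℝ^m} exp(-π⟨SZ,Z⟩)dZ converges and equals det(S)^{-1/2}, where
det(S)^{1/2} is obtained by analytic continuation of the positive square root along
the path t ↦ Re S + t·i·Im S, encoded by a continuous square-root path σ. -/
theorem stmt17 (m : ℕ) (S : Matrix (Fin m) (Fin m) ℂ)
    (hsym : Sᵀ = S)
    (hpos : ∀ v : Fin m → ℝ, v ≠ 0 → 0 < ((S.map Complex.re) *ᵥ v) ⬝ᵥ v) :
    Integrable (fun Z : Fin m → ℝ =>
      Complex.exp (-(Real.pi : ℂ) * ((S *ᵥ vc Z) ⬝ᵥ vc Z))) ∧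
    ∀ σ : ℝ → ℂ, ContinuousOn σ (Set.Icc 0 1) →
      (∀ t ∈ Set.Icc (0:ℝ) 1,
        σ t ^ 2 = ((S.map Complex.re).map (fun x => (x : ℂ))
            + (t : ℂ) • (Complex.I • (S.map Complex.im).map (fun x => (x : ℂ)))).det) →
      σ 0 = Complex.ofReal (Real.sqrt ((S.map Complex.re).det)) →
      (∫ Z : Fin m → ℝ, Complex.exp (-(Real.pi : ℂ) * ((S *ᵥ vc Z) ⬝ᵥ vc Z)))
        = (σ 1)⁻¹ := by
  constructor
  · exact (keyX S hsym hpos).1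
  intro σ hσc hσsq hσ0
  have hπpos := Real.pi_pos
  set St : ℝ → Matrix (Fin m) (Fin m) ℂ := fun t =>
    (S.map Complex.re).map (fun x => (x : ℂ))
      + (t : ℂ) • (Complex.I • (S.map Complex.im).map (fun x => (x : ℂ))) with hStdef
  have hq : ∀ (t : ℝ) (Z : Fin m → ℝ), ((St t *ᵥ vc Z) ⬝ᵥ vc Z)
      = (((S.map Complex.re *ᵥ Z) ⬝ᵥ Z : ℝ) : ℂ)
        + (t : ℂ) * Complex.I * (((S.map Complex.im *ᵥ Z) ⬝ᵥ Z : ℝ) : ℂ) := by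
    intro t Z
    show ((((S.map Complex.re).map (fun x => (x : ℂ))
      + (t : ℂ) • (Complex.I • (S.map Complex.im).map (fun x => (x : ℂ)))) *ᵥ vc Z) ⬝ᵥ vc Z) = _
    rw [Matrix.add_mulVec, add_dotProduct]
    rw [Matrix.smul_mulVec, Matrix.smul_mulVec, smul_dotProduct,
      smul_dotProduct, quadX_real, quadX_real]
    simp [smul_eq_mul]
    ring
  have hAt : ((S.map Complex.re))ᵀ = S.map Complex.re := by
    rw [← Matrix.transpose_map, hsym]
  have hBt : ((S.map Complex.im))ᵀ = S.map Complex.im := by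
    rw [← Matrix.transpose_map, hsym]
  have hsij : ∀ i j : Fin m, S j i = S i j := fun i j =>
    (congrFun (congrFun hsym j) i).symm
  have hent : ∀ (t : ℝ) (a b : Fin m), St t a b
      = (((S a b).re : ℂ)) + (t : ℂ) * (Complex.I * ((S a b).im : ℂ)) := fun t a b => rfl
  have hStsym : ∀ t : ℝ, (St t)ᵀ = St t := by
    intro t
    ext i j
    show St t j i = St t i j
    rw [hent, hent, hsij i j]
  have hStre : ∀ t : ℝ, (St t).map Complex.re = S.map Complex.re := by
    intro t
    ext i j
    show ((((S.map Complex.re) i j : ℂ))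
      + (t : ℂ) * (Complex.I * ((S.map Complex.im) i j : ℂ))).re = _
    simp [Complex.mul_re, Complex.mul_im]
  have hpos' : ∀ t : ℝ, ∀ v : Fin m → ℝ, v ≠ 0 →
      0 < (((St t).map Complex.re) *ᵥ v) ⬝ᵥ v := by
    intro t v hv; rw [hStre t]; exact hpos v hv
  have hkey := fun t : ℝ => keyX (St t) (hStsym t) (hpos' t)
  set F : ℝ → ℂ := fun t => ∫ Z : Fin m → ℝ,
      Complex.exp (-(Real.pi : ℂ) * ((St t *ᵥ vc Z) ⬝ᵥ vc Z)) with hFdef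
  have hnorm : ∀ (t : ℝ) (Z : Fin m → ℝ),
      ‖Complex.exp (-(Real.pi : ℂ) * ((St t *ᵥ vc Z) ⬝ᵥ vc Z))‖
        = Real.exp (-Real.pi * ((S.map Complex.re *ᵥ Z) ⬝ᵥ Z)) := by
    intro t Z
    rw [Complex.norm_exp, hq]
    congr 1
    simp [Complex.mul_re, Complex.add_re, Complex.mul_im]
  have hFcont : Continuous F := by
    rw [hFdef]
    apply continuous_of_dominated
      (bound := fun Z : Fin m → ℝ => Real.exp (-Real.pi * ((S.map Complex.re *ᵥ Z) ⬝ᵥ Z)))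
    · intro t
      exact (contX_gauss (St t)).aestronglyMeasurable
    · intro t
      filter_upwards with Z
      rw [hnorm t Z]
    · refine ((hkey 0).1.norm).congr (Filter.Eventually.of_forall fun Z => hnorm 0 Z)
    · filter_upwards with Z
      have : (fun t : ℝ => Complex.exp (-(Real.pi : ℂ) * ((St t *ᵥ vc Z) ⬝ᵥ vc Z)))
          = fun t : ℝ => Complex.exp (-(Real.pi : ℂ) *
              ((((S.map Complex.re *ᵥ Z) ⬝ᵥ Z : ℝ) : ℂ)
                + (t : ℂ) * Complex.I * (((S.map Complex.im *ᵥ Z) ⬝ᵥ Z : ℝ) : ℂ))) := by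
        funext t; rw [hq t Z]
      rw [this]
      exact Complex.continuous_exp.comp (continuous_const.mul (continuous_const.add
        (((Complex.continuous_ofReal).mul continuous_const).mul continuous_const)))
  have hFsq : ∀ t ∈ Set.Icc (0:ℝ) 1, (F t * σ t) ^ 2 = 1 := by
    intro t ht
    have h1 := (hkey t).2
    have h2 : σ t ^ 2 = (St t).det := hσsq t ht
    calc (F t * σ t) ^ 2 = F t ^ 2 * σ t ^ 2 := by ring
      _ = F t ^ 2 * (St t).det := by rw [h2]
      _ = 1 := h1
  have hval : ∀ t ∈ Set.Icc (0:ℝ) 1, F t * σ t = 1 ∨ F t * σ t = -1 := by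
    intro t ht
    have hfact : (F t * σ t - 1) * (F t * σ t + 1) = 0 := by
      linear_combination hFsq t ht
    rcases mul_eq_zero.mp hfact with h | h
    · exact Or.inl (sub_eq_zero.mp h)
    · exact Or.inr (eq_neg_of_add_eq_zero_left h)
  -- value at 0
  have hq0 : ∀ Z : Fin m → ℝ, -(Real.pi : ℂ) * ((St 0 *ᵥ vc Z) ⬝ᵥ vc Z)
      = ((-Real.pi * ((S.map Complex.re *ᵥ Z) ⬝ᵥ Z) : ℝ) : ℂ) := by
    intro Z; rw [hq 0 Z]; push_cast; ring
  have hF0 : F 0 = Complex.ofReal (∫ Z : Fin m → ℝ,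
      Real.exp (-Real.pi * ((S.map Complex.re *ᵥ Z) ⬝ᵥ Z))) := by
    have h1 : (fun Z : Fin m → ℝ =>
        Complex.exp (-(Real.pi : ℂ) * ((St 0 *ᵥ vc Z) ⬝ᵥ vc Z)))
        = fun Z : Fin m → ℝ =>
          ((Real.exp (-Real.pi * ((S.map Complex.re *ᵥ Z) ⬝ᵥ Z)) : ℝ) : ℂ) := by
      funext Z
      rw [hq0 Z, Complex.ofReal_exp]
    show (∫ Z : Fin m → ℝ,
        Complex.exp (-(Real.pi : ℂ) * ((St 0 *ᵥ vc Z) ⬝ᵥ vc Z))) = _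
    rw [h1]
    exact integral_ofReal
  have hg0int : Integrable (fun Z : Fin m → ℝ =>
      Real.exp (-Real.pi * ((S.map Complex.re *ᵥ Z) ⬝ᵥ Z))) :=
    ((hkey 0).1.norm).congr (Filter.Eventually.of_forall fun Z => hnorm 0 Z)
  have hF0pos : 0 < ∫ Z : Fin m → ℝ,
      Real.exp (-Real.pi * ((S.map Complex.re *ᵥ Z) ⬝ᵥ Z)) := by
    rw [integral_pos_iff_support_of_nonneg (fun Z => (Real.exp_pos _).le) hg0int]
    have hsupp : Function.support (fun Z : Fin m → ℝ =>
        Real.exp (-Real.pi * ((S.map Complex.re *ᵥ Z) ⬝ᵥ Z))) = Set.univ := by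
      ext Z; simp [Real.exp_ne_zero]
    rw [hsupp]
    exact isOpen_univ.measure_pos volume Set.univ_nonempty
  have hApd : (S.map Complex.re).PosDef := by
    refine Matrix.PosDef.of_dotProduct_mulVec_pos (realX_herm hAt) fun x hx => ?_
    simpa [dotProduct_comm] using hpos x hx
  have hσ0pos : 0 < Real.sqrt ((S.map Complex.re).det) :=
    Real.sqrt_pos.mpr hApd.det_pos
  have hG0 : F 0 * σ 0 = 1 := by
    have hpos0 : 0 < (F 0 * σ 0).re := by
      rw [hF0, hσ0, ← Complex.ofReal_mul]
      simpa using mul_pos hF0pos hσ0pos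
    rcases hval 0 (by constructor <;> norm_num) with h | h
    · exact h
    · exfalso; rw [h] at hpos0; norm_num at hpos0
  have hG1 : F 1 * σ 1 = 1 := by
    rcases hval 1 (by constructor <;> norm_num) with h | h
    · exact h
    exfalso
    have hGcont : ContinuousOn (fun t => (F t * σ t).re) (Set.Icc (0:ℝ) 1) :=
      Complex.continuous_re.comp_continuousOn ((hFcont.continuousOn).mul hσc)
    have hIVT := intermediate_value_Icc' (by norm_num : (0:ℝ) ≤ 1) hGcont
    have h0mem : (0:ℝ) ∈ Set.Icc ((F 1 * σ 1).re) ((F 0 * σ 0).re) := by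
      rw [h, hG0]; constructor <;> norm_num
    obtain ⟨t, ht, hFt⟩ := hIVT h0mem
    rcases hval t ht with h' | h' <;> simp [h'] at hFt
  have hSt1 : St 1 = S := by
    show (S.map Complex.re).map (fun x => (x : ℂ))
      + ((1:ℝ) : ℂ) • (Complex.I • (S.map Complex.im).map (fun x => (x : ℂ))) = S
    ext i j
    simp only [Matrix.add_apply, Matrix.smul_apply, Matrix.map_apply, Complex.ofReal_one,
      one_smul, smul_eq_mul]
    rw [mul_comm Complex.I, Complex.re_add_im]
  have hF1 : F 1 = (σ 1)⁻¹ :=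
    eq_inv_of_mul_eq_one_left (by linear_combination hG1)
  calc (∫ Z : Fin m → ℝ, Complex.exp (-(Real.pi : ℂ) * ((S *ᵥ vc Z) ⬝ᵥ vc Z)))
      = F 1 := by rw [hFdef]; simp only; rw [hSt1]
    _ = (σ 1)⁻¹ := hF1

end
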